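/- Let (a_n) be a bounded sequence of nonnegative real numbers. Then liminf_{N→∞} (1/N) ∑_{n=1}^N a_n = 0 if and only if there exists a set S ⊆ ℕ of upper density 1 such that a_n → 0 along n ∈ S (i.e., for every ε > 0, a_n < ε for all sufficiently large n ∈ S). -/

import Mathlib

open Filter
open scoped Classical

noncomputable def upperDensity (S : Set ℕ) : ℝ :=
  Filter.limsup (fun N : ℕ => (((Finset.Icc 1 N).filter (fun n => n ∈ S)).card : ℝ) / N)
    Filter.atTop

noncomputable def dens (S : Set ℕ) (N : ℕ) : ℝ :=
  (((Finset.Icc 1 N).filter (fun n => n ∈ S)).card : ℝ) / N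

lemma dens_nonneg (S : Set ℕ) (N : ℕ) : 0 ≤ dens S N := by
  unfold dens; positivity

lemma card_filter_le (S : Set ℕ) (N : ℕ) :
    (((Finset.Icc 1 N).filter (fun n => n ∈ S)).card : ℝ) ≤ N := by
  have h := Finset.card_filter_le (Finset.Icc 1 N) (fun n => n ∈ S)
  have : (Finset.Icc 1 N).card = N := by simp [Nat.card_Icc]
  exact_mod_cast this ▸ h

lemma dens_le_one (S : Set ℕ) (N : ℕ) : dens S N ≤ 1 := by
  rcases Nat.eq_zero_or_pos N with h | h
  · simp [dens, h]
  · rw [dens, div_le_one (by exact_mod_cast h)]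
    exact card_filter_le S N

lemma upperDensity_le_one (S : Set ℕ) : upperDensity S ≤ 1 := by
  have : upperDensity S = Filter.limsup (dens S) Filter.atTop := rfl
  rw [this]
  have hb : Filter.IsBoundedUnder (· ≥ ·) Filter.atTop (dens S) :=
    Filter.isBoundedUnder_of ⟨0, fun N => dens_nonneg S N⟩
  exact Filter.limsup_le_of_le hb.isCoboundedUnder_le
    (Filter.Eventually.of_forall (dens_le_one S))

lemma markov (a : ℕ → ℝ) (hnn : ∀ n, 0 ≤ a n) (N : ℕ) (ε : ℝ) :
    (((Finset.Icc 1 N).filter (fun n => ε ≤ a n)).card : ℝ) * ε ≤ ∑ n ∈ Finset.Icc 1 N, a n := by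
  calc (((Finset.Icc 1 N).filter (fun n => ε ≤ a n)).card : ℝ) * ε
      = ∑ _n ∈ (Finset.Icc 1 N).filter (fun n => ε ≤ a n), ε := by
        rw [Finset.sum_const, nsmul_eq_mul]
    _ ≤ ∑ n ∈ (Finset.Icc 1 N).filter (fun n => ε ≤ a n), a n :=
        Finset.sum_le_sum (fun n hn => (Finset.mem_filter.1 hn).2)
    _ ≤ ∑ n ∈ Finset.Icc 1 N, a n :=
        Finset.sum_le_sum_of_subset_of_nonneg (Finset.filter_subset _ _) (fun n _ _ => hnn n)

lemma bwd (a : ℕ → ℝ) (hnn : ∀ n, 0 ≤ a n) (C : ℝ) (hC : ∀ n, a n ≤ C) (hC1 : 1 ≤ C)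
    (S : Set ℕ) (hS : upperDensity S = 1)
    (h0 : ∀ ε > 0, ∃ N : ℕ, ∀ n ∈ S, N ≤ n → a n < ε) :
    Filter.liminf (fun N : ℕ => (∑ n ∈ Finset.Icc 1 N, a n) / N) Filter.atTop = 0 := by
  have hC0 : (0:ℝ) < C := lt_of_lt_of_le one_pos hC1
  set A : ℕ → ℝ := fun N => (∑ n ∈ Finset.Icc 1 N, a n) / N with hA
  have hA0 : ∀ N, 0 ≤ A N := by
    intro N
    apply div_nonneg (Finset.sum_nonneg (fun n _ => hnn n)) (by positivity)
  have hAC : ∀ N, A N ≤ C := by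
    intro N
    rcases Nat.eq_zero_or_pos N with h | h
    · simp [hA, h]; linarith
    · have hNpos : (0:ℝ) < N := by exact_mod_cast h
      rw [hA, div_le_iff₀ hNpos]
      calc ∑ n ∈ Finset.Icc 1 N, a n ≤ ∑ _n ∈ Finset.Icc 1 N, C :=
            Finset.sum_le_sum (fun n _ => hC n)
        _ = C * N := by rw [Finset.sum_const, Nat.card_Icc, nsmul_eq_mul]; push_cast; ring
  have hbddge : Filter.IsBoundedUnder (· ≥ ·) Filter.atTop A :=
    Filter.isBoundedUnder_of ⟨0, hA0⟩
  have hbddle : Filter.IsBoundedUnder (· ≤ ·) Filter.atTop A :=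
    Filter.isBoundedUnder_of ⟨C, hAC⟩
  have hlow : 0 ≤ Filter.liminf A Filter.atTop :=
    Filter.le_liminf_of_le hbddle.isCoboundedUnder_ge (Filter.Eventually.of_forall hA0)
  have hhigh : Filter.liminf A Filter.atTop ≤ 0 := by
    apply le_of_forall_pos_le_add
    intro ε hε
    rw [zero_add]
    apply Filter.liminf_le_of_frequently_le _ hbddge
    -- show ∃ᶠ N, A N ≤ ε
    obtain ⟨N₀, hN₀⟩ := h0 (ε/3) (by positivity)
    have hdb : Filter.IsBoundedUnder (· ≥ ·) Filter.atTop (dens S) :=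
      Filter.isBoundedUnder_of ⟨0, fun N => dens_nonneg S N⟩
    have hdd : ∃ᶠ N in Filter.atTop, 1 - ε/(3*C) < dens S N := by
      apply Filter.frequently_lt_of_lt_limsup hdb.isCoboundedUnder_le
      have : Filter.limsup (dens S) Filter.atTop = upperDensity S := rfl
      rw [this, hS]
      have : 0 < ε/(3*C) := by positivity
      linarith
    have hM : ∀ᶠ N : ℕ in Filter.atTop, (max 1 ⌈3*C*N₀/ε⌉₊ : ℕ) ≤ N :=
      Filter.eventually_ge_atTop _
    apply (hdd.and_eventually hM).mono
    rintro N ⟨hd, hMN⟩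
    have hN1 : 1 ≤ N := le_trans (le_max_left _ _) hMN
    have hNpos : (0:ℝ) < N := by exact_mod_cast hN1
    have hNbig : 3*C*(N₀:ℝ)/ε ≤ N := by
      calc 3*C*(N₀:ℝ)/ε ≤ (⌈3*C*N₀/ε⌉₊ : ℝ) := Nat.le_ceil _
        _ ≤ ((max 1 ⌈3*C*N₀/ε⌉₊ : ℕ) : ℝ) := by exact_mod_cast le_max_right _ _
        _ ≤ N := by exact_mod_cast hMN
    rw [hA, div_le_iff₀ hNpos]
    set p : ℕ → Prop := fun n => n ∈ S ∧ N₀ ≤ n with hp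
    have hsplit := Finset.sum_filter_add_sum_filter_not (Finset.Icc 1 N) p a
    set cS : ℝ := (((Finset.Icc 1 N).filter (fun n => n ∈ S)).card : ℝ) with hcS
    -- bound on the good part
    have h1 : ∑ n ∈ (Finset.Icc 1 N).filter p, a n ≤ (N:ℝ) * (ε/3) := by
      calc ∑ n ∈ (Finset.Icc 1 N).filter p, a n
          ≤ ∑ _n ∈ (Finset.Icc 1 N).filter p, (ε/3) := by
            apply Finset.sum_le_sum
            intro n hn
            obtain ⟨hnS, hnN₀⟩ := (Finset.mem_filter.1 hn).2
            exact le_of_lt (hN₀ n hnS hnN₀)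
        _ = (((Finset.Icc 1 N).filter p).card : ℝ) * (ε/3) := by
            rw [Finset.sum_const, nsmul_eq_mul]
        _ ≤ (N:ℝ) * (ε/3) := by
            apply mul_le_mul_of_nonneg_right _ (by positivity)
            have h := Finset.card_filter_le (Finset.Icc 1 N) p
            have h2 : (Finset.Icc 1 N).card = N := by simp [Nat.card_Icc]
            exact_mod_cast h2 ▸ h
    -- bound on the bad part
    have hcard : (((Finset.Icc 1 N).filter (fun n => ¬ p n)).card : ℝ) ≤ ((N:ℝ) - cS) + N₀ := by
      have hsub : (Finset.Icc 1 N).filter (fun n => ¬ p n) ⊆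
          ((Finset.Icc 1 N).filter (fun n => n ∉ S)) ∪ ((Finset.Icc 1 N).filter (fun n => n < N₀)) := by
        intro n hn
        obtain ⟨hmem, hnp⟩ := Finset.mem_filter.1 hn
        simp only [hp, not_and, not_le] at hnp
        by_cases hns : n ∈ S
        · exact Finset.mem_union_right _ (Finset.mem_filter.2 ⟨hmem, hnp hns⟩)
        · exact Finset.mem_union_left _ (Finset.mem_filter.2 ⟨hmem, hns⟩)
      have h2 : ((Finset.Icc 1 N).filter (fun n => n < N₀)).card ≤ N₀ := by
        calc ((Finset.Icc 1 N).filter (fun n => n < N₀)).card ≤ (Finset.Ico 1 N₀).card := by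
              apply Finset.card_le_card
              intro n hn
              obtain ⟨hmem, hlt⟩ := Finset.mem_filter.1 hn
              exact Finset.mem_Ico.2 ⟨(Finset.mem_Icc.1 hmem).1, hlt⟩
          _ ≤ N₀ := by rw [Nat.card_Ico]; omega
      have h3 : (((Finset.Icc 1 N).filter (fun n => n ∉ S)).card : ℝ) = (N:ℝ) - cS := by
        have h4 := Finset.card_filter_add_card_filter_not
          (s := Finset.Icc 1 N) (p := fun n => n ∈ S)
        have h5 : (Finset.Icc 1 N).card = N := by simp [Nat.card_Icc]
        rw [h5] at h4
        rw [hcS]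
        have h6 : (((Finset.Icc 1 N).filter (fun n => n ∈ S)).card : ℝ) +
            (((Finset.Icc 1 N).filter (fun n => n ∉ S)).card : ℝ) = N := by exact_mod_cast h4
        linarith
      calc (((Finset.Icc 1 N).filter (fun n => ¬ p n)).card : ℝ)
          ≤ (((Finset.Icc 1 N).filter (fun n => n ∉ S)) ∪ ((Finset.Icc 1 N).filter (fun n => n < N₀))).card := by
            exact_mod_cast Finset.card_le_card hsub
        _ ≤ (((Finset.Icc 1 N).filter (fun n => n ∉ S)).card : ℝ) + ((Finset.Icc 1 N).filter (fun n => n < N₀)).card := by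
            exact_mod_cast Finset.card_union_le _ _
        _ ≤ ((N:ℝ) - cS) + N₀ := by
            rw [h3]
            have : (((Finset.Icc 1 N).filter (fun n => n < N₀)).card : ℝ) ≤ N₀ := by exact_mod_cast h2
            linarith
    have h2 : ∑ n ∈ (Finset.Icc 1 N).filter (fun n => ¬ p n), a n ≤ (((N:ℝ) - cS) + N₀) * C := by
      calc ∑ n ∈ (Finset.Icc 1 N).filter (fun n => ¬ p n), a n
          ≤ ∑ _n ∈ (Finset.Icc 1 N).filter (fun n => ¬ p n), C :=
            Finset.sum_le_sum (fun n _ => hC n)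
        _ = (((Finset.Icc 1 N).filter (fun n => ¬ p n)).card : ℝ) * C := by
            rw [Finset.sum_const, nsmul_eq_mul]
        _ ≤ (((N:ℝ) - cS) + N₀) * C := mul_le_mul_of_nonneg_right hcard (le_of_lt hC0)
    -- combine
    have hdN : (1 - ε/(3*C)) * N < cS := by
      have := hd
      rw [dens, ← hcS] at this
      calc (1 - ε/(3*C)) * N < (cS / N) * N := by
            apply mul_lt_mul_of_pos_right this hNpos
        _ = cS := by field_simp
    have hN₀C : (N₀:ℝ) * C ≤ ε/3 * N := by
      have h6 : 3*C*(N₀:ℝ) ≤ ε * N := by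
        rw [div_le_iff₀ hε] at hNbig
        linarith [hNbig]
      nlinarith
    have hcomb : ((N:ℝ) - cS) * C ≤ ε/3 * N := by
      have : (N:ℝ) - cS < ε/(3*C) * N := by linarith
      have h7 : ((N:ℝ) - cS) * C ≤ (ε/(3*C) * N) * C := by
        apply mul_le_mul_of_nonneg_right (le_of_lt this) (le_of_lt hC0)
      calc ((N:ℝ) - cS) * C ≤ (ε/(3*C) * N) * C := h7
        _ = ε/3 * N := by field_simp
    calc ∑ n ∈ Finset.Icc 1 N, a n
        = ∑ n ∈ (Finset.Icc 1 N).filter p, a n + ∑ n ∈ (Finset.Icc 1 N).filter (fun n => ¬ p n), a n := hsplit.symm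
      _ ≤ (N:ℝ) * (ε/3) + (((N:ℝ) - cS) + N₀) * C := by linarith
      _ = (N:ℝ) * (ε/3) + ((N:ℝ) - cS) * C + (N₀:ℝ) * C := by ring
      _ ≤ (N:ℝ) * (ε/3) + ε/3 * N + ε/3 * N := by linarith
      _ = ε * N := by ring
  linarith

lemma fwd (a : ℕ → ℝ) (hnn : ∀ n, 0 ≤ a n) (C : ℝ) (hC : ∀ n, a n ≤ C)
    (hlim : Filter.liminf (fun N : ℕ => (∑ n ∈ Finset.Icc 1 N, a n) / N) Filter.atTop = 0) :
    ∃ S : Set ℕ, upperDensity S = 1 ∧ ∀ ε > 0, ∃ N : ℕ, ∀ n ∈ S, N ≤ n → a n < ε := by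
  set A : ℕ → ℝ := fun N => (∑ n ∈ Finset.Icc 1 N, a n) / N with hA
  have hC0 : 0 ≤ C := le_trans (hnn 0) (hC 0)
  have hAC : ∀ N, A N ≤ C := by
    intro N
    rcases Nat.eq_zero_or_pos N with h | h
    · simp [hA, h]; linarith
    · have hNpos : (0:ℝ) < N := by exact_mod_cast h
      rw [hA, div_le_iff₀ hNpos]
      calc ∑ n ∈ Finset.Icc 1 N, a n ≤ ∑ _n ∈ Finset.Icc 1 N, C :=
            Finset.sum_le_sum (fun n _ => hC n)
        _ = C * N := by rw [Finset.sum_const, Nat.card_Icc, nsmul_eq_mul]; push_cast; ring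
  have hcobdd : Filter.IsCoboundedUnder (· ≥ ·) Filter.atTop A :=
    (Filter.isBoundedUnder_of ⟨C, hAC⟩).isCoboundedUnder_ge
  have key : ∀ k m : ℕ, ∃ M : ℕ, m < M ∧ (k+1) * m ≤ M ∧ A M < 1/((k:ℝ)+1)^2 := by
    intro k m
    have hfreq : ∃ᶠ N in Filter.atTop, A N < 1/((k:ℝ)+1)^2 := by
      apply Filter.frequently_lt_of_liminf_lt hcobdd
      rw [hlim]; positivity
    obtain ⟨M, hM1, hM2⟩ :=
      (hfreq.and_eventually (Filter.eventually_ge_atTop (max (m+1) ((k+1)*m)))).exists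
    exact ⟨M, lt_of_lt_of_le (Nat.lt_succ_self m) (le_trans (le_max_left _ _) hM2),
      le_trans (le_max_right _ _) hM2, hM1⟩
  choose F hF1 hF2 hF3 using key
  set Nk : ℕ → ℕ := fun k => Nat.rec 0 (fun k ih => F k ih) k with hNk
  have hNks : ∀ k, Nk (k+1) = F k (Nk k) := fun k => rfl
  have hmono : StrictMono Nk := by
    apply strictMono_nat_of_lt_succ
    intro k
    rw [hNks]
    exact hF1 k (Nk k)
  have hAk : ∀ k, A (Nk (k+1)) < 1/((k:ℝ)+1)^2 := by
    intro k; rw [hNks]; exact hF3 k (Nk k)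
  have hgrow : ∀ k, (k+1) * Nk k ≤ Nk (k+1) := by
    intro k; rw [hNks]; exact hF2 k (Nk k)
  set S : Set ℕ := {n | ∃ k, Nk k < n ∧ n ≤ Nk (k+1) ∧ a n < 1/((k:ℝ)+1)} with hSdef
  refine ⟨S, ?_, ?_⟩
  · -- upper density 1
    apply le_antisymm (upperDensity_le_one S)
    apply le_of_forall_sub_le
    intro ε hε
    have hbdd1 : Filter.IsBoundedUnder (· ≤ ·) Filter.atTop (dens S) :=
      Filter.isBoundedUnder_of ⟨1, dens_le_one S⟩
    have : upperDensity S = Filter.limsup (dens S) Filter.atTop := rfl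
    rw [this]
    apply Filter.le_limsup_of_frequently_le _ hbdd1
    rw [Filter.frequently_atTop]
    intro m
    obtain ⟨K, hK⟩ := exists_nat_gt (2/ε)
    set k := max K m with hk
    set N := Nk (k+1) with hN
    have hkK : (K:ℝ) ≤ k := by exact_mod_cast le_max_left K m
    have h2k : 2/((k:ℝ)+1) < ε := by
      rw [div_lt_iff₀ (by positivity)]
      rw [div_lt_iff₀ hε] at hK
      nlinarith
    have hNm : m ≤ N := by
      calc m ≤ k := le_max_right K m
        _ ≤ k+1 := Nat.le_succ k
        _ ≤ Nk (k+1) := hmono.le_apply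
    refine ⟨N, hNm, ?_⟩
    -- main counting estimate
    have hN1 : 1 ≤ N := le_trans (Nat.succ_le_succ (Nat.zero_le k)) hmono.le_apply
    have hNpos : (0:ℝ) < N := by exact_mod_cast hN1
    set c1 : ℝ := 1/((k:ℝ)+1) with hc1
    have hc1pos : 0 < c1 := by positivity
    set bad := (Finset.Icc 1 N).filter (fun n => c1 ≤ a n) with hbad
    set good := (Finset.Icc 1 N).filter (fun n => ¬ c1 ≤ a n) with hgood
    have hsumlt : ∑ n ∈ Finset.Icc 1 N, a n < (N:ℝ) * (1/((k:ℝ)+1)^2) := by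
      have h1 := hAk k
      rw [hA] at h1
      have := (div_lt_iff₀ hNpos).1 h1
      calc ∑ n ∈ Finset.Icc 1 N, a n < 1/((k:ℝ)+1)^2 * N := this
        _ = (N:ℝ) * (1/((k:ℝ)+1)^2) := by ring
    have hbadcard : (bad.card : ℝ) ≤ (N:ℝ) * c1 := by
      have h1 := markov a hnn N c1
      rw [← hbad] at h1
      have h2 : (bad.card : ℝ) * c1 < (N:ℝ) * (1/((k:ℝ)+1)^2) := lt_of_le_of_lt h1 hsumlt
      have h3 : (N:ℝ) * (1/((k:ℝ)+1)^2) = ((N:ℝ) * c1) * c1 := by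
        rw [hc1, one_div, one_div, ← inv_pow]; ring
      rw [h3] at h2
      exact le_of_lt ((mul_lt_mul_iff_of_pos_right hc1pos).1 h2)
    have hgoodcard : (good.card : ℝ) = (N:ℝ) - bad.card := by
      have h4 := Finset.card_filter_add_card_filter_not
        (s := Finset.Icc 1 N) (p := fun n => c1 ≤ a n)
      have h5 : (Finset.Icc 1 N).card = N := by simp [Nat.card_Icc]
      rw [h5] at h4
      have h6 : (bad.card : ℝ) + good.card = N := by exact_mod_cast h4
      linarith
    have hsub : good ⊆ ((Finset.Icc 1 N).filter (fun n => n ∈ S)) ∪ Finset.Icc 1 (Nk k) := by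
      intro n hn
      obtain ⟨hmem, hlt⟩ := Finset.mem_filter.1 hn
      obtain ⟨h1n, hnN⟩ := Finset.mem_Icc.1 hmem
      rw [not_le] at hlt
      by_cases hcase : Nk k < n
      · apply Finset.mem_union_left
        apply Finset.mem_filter.2 ⟨hmem, ?_⟩
        exact ⟨k, hcase, hnN, hlt⟩
      · exact Finset.mem_union_right _ (Finset.mem_Icc.2 ⟨h1n, not_lt.1 hcase⟩)
    have hcS : ((good.card : ℝ)) ≤ (((Finset.Icc 1 N).filter (fun n => n ∈ S)).card : ℝ) + Nk k := by
      calc ((good.card : ℝ)) ≤ ((((Finset.Icc 1 N).filter (fun n => n ∈ S)) ∪ Finset.Icc 1 (Nk k)).card : ℝ) := by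
            exact_mod_cast Finset.card_le_card hsub
        _ ≤ (((Finset.Icc 1 N).filter (fun n => n ∈ S)).card : ℝ) + (Finset.Icc 1 (Nk k)).card := by
            exact_mod_cast Finset.card_union_le _ _
        _ = (((Finset.Icc 1 N).filter (fun n => n ∈ S)).card : ℝ) + Nk k := by
            rw [Nat.card_Icc]; simp
    have hNkk : ((Nk k : ℝ)) ≤ (N:ℝ) * c1 := by
      have h1 : ((k:ℝ)+1) * Nk k ≤ N := by exact_mod_cast hgrow k
      rw [hc1]
      rw [mul_one_div, le_div_iff₀ (by positivity)]
      linarith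
    have hfinal : (1 - ε) * N ≤ (((Finset.Icc 1 N).filter (fun n => n ∈ S)).card : ℝ) := by
      have h2c : 2 * ((N:ℝ) * c1) < ε * N := by
        have : 2 * c1 < ε := by rw [hc1, mul_one_div]; exact h2k
        nlinarith
      nlinarith [hbadcard, hgoodcard, hcS, hNkk]
    rw [dens, le_div_iff₀ hNpos]
    exact hfinal
  · -- tends to zero along S
    intro ε hε
    obtain ⟨K, hK⟩ := exists_nat_gt (1/ε)
    refine ⟨Nk K + 1, ?_⟩
    rintro n ⟨k, hk1, hk2, hk3⟩ hn
    have hKk : K ≤ k := by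
      by_contra hcon
      push_neg at hcon
      have : Nk (k+1) ≤ Nk K := hmono.monotone hcon
      omega
    have h1 : 1/((k:ℝ)+1) ≤ 1/((K:ℝ)+1) := by
      apply one_div_le_one_div_of_le (by positivity)
      have : (K:ℝ) ≤ k := by exact_mod_cast hKk
      linarith
    have h2 : 1/((K:ℝ)+1) < ε := by
      rw [div_lt_iff₀ (by positivity)]
      rw [div_lt_iff₀ hε] at hK
      nlinarith
    linarith

theorem stmt0 (a : ℕ → ℝ) (hnn : ∀ n, 0 ≤ a n) (hbd : ∃ C, ∀ n, a n ≤ C) :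
    Filter.liminf (fun N : ℕ => (∑ n ∈ Finset.Icc 1 N, a n) / N) Filter.atTop = 0 ↔
      ∃ S : Set ℕ, upperDensity S = 1 ∧
        ∀ ε > 0, ∃ N : ℕ, ∀ n ∈ S, N ≤ n → a n < ε := by
  obtain ⟨C, hC⟩ := hbd
  constructor
  · intro h
    exact fwd a hnn C hC h
  · rintro ⟨S, hS, h0⟩
    exact bwd a hnn (max C 1) (fun n => le_trans (hC n) (le_max_left C 1)) (le_max_right C 1) S hS h0
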